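/- For the dihedral group I_2(N) with constant multiplicity m, any m-quasiinvariant homogeneous polynomial of degree d ≤ mN is invariant under the group. -/

import Mathlib

/-- Evaluate a two-variable polynomial at `(z, conj z)`. -/
noncomputable def evalZ (P : MvPolynomial (Fin 2) ℂ) (z : ℂ) : ℂ :=
  MvPolynomial.eval (fun i => if i = 0 then z else (starRingEnd ℂ) z) P

/-- `m`-quasiinvariance for the dihedral group `I₂(N)` in polar coordinates:
all odd angular derivatives up to order `2m-1` vanish on the mirror lines `φ = πk/N`. -/
def IsQuasiInv (N m : ℕ) (P : MvPolynomial (Fin 2) ℂ) : Prop :=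
  ∀ (r : ℝ) (k : ℕ), k < N → ∀ s : ℕ, 1 ≤ s → s ≤ m →
    iteratedDeriv (2*s-1)
      (fun φ : ℝ => evalZ P ((r : ℂ) * Complex.exp ((φ : ℂ) * Complex.I)))
      (Real.pi * k / N) = 0

open Complex Finset Polynomial



-- iterated derivative of a finite sum of exponentials
lemma iterDeriv_exp_sum {ι : Type*} (T : Finset ι) (a c : ι → ℂ) (n : ℕ) :
    iteratedDeriv n (fun φ : ℝ => ∑ b ∈ T, a b * Complex.exp (c b * φ)) =
      fun φ : ℝ => ∑ b ∈ T, a b * (c b) ^ n * Complex.exp (c b * φ) := by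
  induction n with
  | zero => simp [iteratedDeriv_zero]
  | succ n ih =>
    rw [iteratedDeriv_succ, ih]
    funext φ
    have : ∀ b ∈ T, HasDerivAt (fun φ : ℝ => a b * (c b) ^ n * Complex.exp (c b * φ))
        (a b * (c b) ^ (n+1) * Complex.exp (c b * φ)) φ := by
      intro b _
      have h1 : HasDerivAt (fun φ : ℝ => (φ : ℂ)) 1 φ := (hasDerivAt_id φ).ofReal_comp
      have h2 : HasDerivAt (fun φ : ℝ => c b * (φ:ℂ)) (c b) φ := by
        simpa using h1.const_mul (c b)
      have h3 := h2.cexp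
      have h4 := h3.const_mul (a b * (c b) ^ n)
      convert h4 using 1
      · rfl
      ring
    have := HasDerivAt.fun_sum this
    rw [this.deriv]


-- key linear-algebra lemma via Lagrange interpolation
lemma key_vandermonde {ι : Type*} [DecidableEq ι] (T : Finset ι) (m : ℕ) (u x : ι → ℂ)
    (hcard : T.card ≤ m) (hinj : Set.InjOn x T)
    (heq : ∀ t < m, ∑ b ∈ T, u b * (x b) ^ t = 0) :
    ∀ b ∈ T, u b = 0 := by
  intro b0 hb0
  set L : ℂ[X] := Lagrange.basis T x b0 with hL
  have hdeg : L.natDegree < m := by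
    have := Lagrange.natDegree_basis hinj hb0
    have h1 : 1 ≤ T.card := Finset.card_pos.mpr ⟨b0, hb0⟩
    rw [hL, this]
    omega
  have heval : ∀ b ∈ T, L.eval (x b) = if b = b0 then 1 else 0 := by
    intro b hb
    by_cases h : b = b0
    · subst h; simp [hL, Lagrange.eval_basis_self hinj hb]
    · simp [h, hL, Lagrange.eval_basis_of_ne (Ne.symm h) hb]
  have hexp : ∀ b ∈ T, L.eval (x b) = ∑ t ∈ Finset.range m, L.coeff t * (x b) ^ t := by
    intro b _
    exact Polynomial.eval_eq_sum_range' hdeg _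
  have : ∑ b ∈ T, u b * L.eval (x b) = 0 := by
    calc ∑ b ∈ T, u b * L.eval (x b)
        = ∑ b ∈ T, ∑ t ∈ Finset.range m, L.coeff t * (u b * (x b) ^ t) := by
          refine Finset.sum_congr rfl fun b hb => ?_
          rw [hexp b hb, Finset.mul_sum]
          exact Finset.sum_congr rfl fun t _ => by ring
      _ = ∑ t ∈ Finset.range m, L.coeff t * ∑ b ∈ T, u b * (x b) ^ t := by
          rw [Finset.sum_comm]
          exact Finset.sum_congr rfl fun t _ => by rw [Finset.mul_sum]
      _ = 0 := by
          refine Finset.sum_eq_zero fun t ht => ?_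
          rw [heq t (Finset.mem_range.mp ht), mul_zero]
  rw [Finset.sum_congr rfl (fun b hb => by rw [heval b hb])] at this
  simpa [mul_ite, Finset.sum_ite_eq' T b0, hb0] using this


/-- the monomial exponent with z-degree d-b and z̄-degree b -/
noncomputable def expo (d b : ℕ) : Fin 2 →₀ ℕ := Finsupp.single 0 (d - b) + Finsupp.single 1 b

lemma evalZ_homog (P : MvPolynomial (Fin 2) ℂ) (d : ℕ) (hhom : P.IsHomogeneous d) (z : ℂ) :
    evalZ P z = ∑ b ∈ Finset.range (d+1),
      P.coeff (expo d b) * z ^ (d - b) * (starRingEnd ℂ) z ^ b := by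
  have hdeg : ∀ μ ∈ P.support, Finsupp.degree μ = d := by
    intro μ hμ
    by_contra h
    exact (MvPolynomial.mem_support_iff.mp hμ) (hhom.coeff_eq_zero h)
  have hdeg2 : ∀ μ : Fin 2 →₀ ℕ, Finsupp.degree μ = μ 0 + μ 1 := by
    intro μ
    rw [Finsupp.degree_apply, Finset.sum_subset (Finset.subset_univ μ.support)
      (fun i _ hi => Finsupp.notMem_support_iff.mp hi), Fin.sum_univ_two]
  have hsub : P.support ⊆ (Finset.range (d+1)).image (expo d) := by
    intro μ hμ
    refine Finset.mem_image.mpr ⟨μ 1, Finset.mem_range.mpr ?_, ?_⟩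
    · have := hdeg μ hμ; rw [hdeg2] at this; omega
    · have h01 : μ 0 + μ 1 = d := by rw [← hdeg2]; exact hdeg μ hμ
      ext i
      fin_cases i <;> simp [expo, Finsupp.single_apply] <;> omega
  have hinj : Set.InjOn (expo d) (Finset.range (d+1)) := by
    intro a _ b _ hab
    have : (expo d a) 1 = (expo d b) 1 := by rw [hab]
    simpa [expo, Finsupp.single_apply] using this
  rw [evalZ, MvPolynomial.eval_eq']
  rw [Finset.sum_subset hsub (fun μ _ hμ => by
    rw [MvPolynomial.notMem_support_iff.mp hμ, zero_mul])]
  rw [Finset.sum_image hinj]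
  refine Finset.sum_congr rfl fun b hb => ?_
  have hb' : b ≤ d := Nat.lt_succ_iff.mp (Finset.mem_range.mp hb)
  have e0 : (expo d b) 0 = d - b := by simp [expo, Finsupp.single_apply]
  have e1 : (expo d b) 1 = b := by simp [expo, Finsupp.single_apply]
  rw [Fin.prod_univ_two, e0, e1]
  simp [mul_assoc]
section Main
variable (N m d : ℕ) (P : MvPolynomial (Fin 2) ℂ)

/-- frequency of the b-th monomial -/
def jz (d b : ℕ) : ℤ := (d : ℤ) - 2 * b

lemma eval_circle (hhom : P.IsHomogeneous d) (φ : ℝ) :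
    evalZ P ((1:ℝ) * Complex.exp ((φ:ℂ) * Complex.I)) =
    ∑ b ∈ Finset.range (d+1), P.coeff (expo d b) *
      Complex.exp (((jz d b : ℂ) * Complex.I) * (φ:ℂ)) := by
  rw [Complex.ofReal_one, one_mul, evalZ_homog P d hhom]
  refine Finset.sum_congr rfl fun b hb => ?_
  have hb' : b ≤ d := Nat.lt_succ_iff.mp (Finset.mem_range.mp hb)
  have hconj : (starRingEnd ℂ) (Complex.exp ((φ:ℂ) * Complex.I)) =
      Complex.exp ((φ:ℂ) * (-Complex.I)) := by
    rw [← Complex.exp_conj, map_mul, Complex.conj_ofReal, Complex.conj_I]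
  rw [hconj, ← Complex.exp_nat_mul, ← Complex.exp_nat_mul, mul_assoc, ← Complex.exp_add]
  congr 1
  have : ((d - b : ℕ) : ℂ) = (d : ℂ) - (b : ℂ) := by
    push_cast [Nat.cast_sub hb']; ring
  rw [this]
  simp only [jz]
  push_cast
  ring


lemma S_vanish (N m d : ℕ) (hN : 1 ≤ N) (P : MvPolynomial (Fin 2) ℂ)
    (hhom : P.IsHomogeneous d) (hq : IsQuasiInv N m P) :
    ∀ (k : ℕ) (s : ℕ), 1 ≤ s → s ≤ m →
    ∑ b ∈ Finset.range (d+1), P.coeff (expo d b) *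
      ((jz d b : ℂ) * Complex.I) ^ (2*s-1) *
      Complex.exp (((jz d b : ℂ) * Complex.I) * ((Real.pi * k / N : ℝ) : ℂ)) = 0 := by
  -- first for k < N
  have base : ∀ (k : ℕ), k < N → ∀ (s : ℕ), 1 ≤ s → s ≤ m →
      ∑ b ∈ Finset.range (d+1), P.coeff (expo d b) *
        ((jz d b : ℂ) * Complex.I) ^ (2*s-1) *
        Complex.exp (((jz d b : ℂ) * Complex.I) * ((Real.pi * k / N : ℝ) : ℂ)) = 0 := by
    intro k hk s hs hsm
    have h := hq 1 k hk s hs hsm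
    have hfun : (fun φ : ℝ => evalZ P (((1:ℝ):ℂ) * Complex.exp ((φ : ℂ) * Complex.I))) =
        fun φ : ℝ => ∑ b ∈ Finset.range (d+1), P.coeff (expo d b) *
          Complex.exp (((jz d b : ℂ) * Complex.I) * (φ:ℂ)) := by
      funext φ
      exact eval_circle d P hhom φ
    rw [hfun, iterDeriv_exp_sum] at h
    convert h using 2 with b
  -- step: shift by N multiplies by (-1)^d
  have step : ∀ (k : ℕ) (s : ℕ),
      ∑ b ∈ Finset.range (d+1), P.coeff (expo d b) *
        ((jz d b : ℂ) * Complex.I) ^ (2*s-1) *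
        Complex.exp (((jz d b : ℂ) * Complex.I) * ((Real.pi * (k+N:ℕ) / N : ℝ) : ℂ)) =
      (-1:ℂ)^d * ∑ b ∈ Finset.range (d+1), P.coeff (expo d b) *
        ((jz d b : ℂ) * Complex.I) ^ (2*s-1) *
        Complex.exp (((jz d b : ℂ) * Complex.I) * ((Real.pi * k / N : ℝ) : ℂ)) := by
    intro k s
    rw [Finset.mul_sum]
    refine Finset.sum_congr rfl fun b hb => ?_
    have hNR : (N:ℝ) ≠ 0 := by positivity
    have harg : ((Real.pi * (k+N:ℕ) / N : ℝ) : ℂ) = ((Real.pi * k / N : ℝ) : ℂ) + (Real.pi : ℝ) := by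
      norm_cast
      field_simp
      ring
      push_cast
      rfl
    have hsign : Complex.exp ((jz d b : ℂ) * Complex.I * ((Real.pi:ℝ):ℂ)) = (-1:ℂ)^d := by
      have : (jz d b : ℂ) * Complex.I * ((Real.pi:ℝ):ℂ) =
          (jz d b : ℂ) * (Real.pi * Complex.I) := by push_cast; ring
      rw [this, Complex.exp_int_mul, Complex.exp_pi_mul_I]
      rw [jz, zpow_sub₀ (by norm_num : (-1:ℂ) ≠ 0)]
      have h2b : ((-1:ℂ)) ^ ((2 * b : ℤ)) = 1 := by
        rw [zpow_mul]
        norm_num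
      rw [h2b, zpow_natCast]
      simp
    rw [harg, mul_add, Complex.exp_add, hsign]
    ring
  -- now all k by strong induction
  intro k
  induction k using Nat.strong_induction_on with
  | _ k ih =>
    intro s hs hsm
    by_cases hk : k < N
    · exact base k hk s hs hsm
    · push_neg at hk
      have hN1 : 1 ≤ N := hN
      have hkN : k - N < k := by omega
      have hkeq : k = (k - N) + N := by omega
      rw [hkeq, step (k - N) s, ih (k - N) hkN s hs hsm, mul_zero]

lemma class_eq (N m d : ℕ) (hN : 1 ≤ N) (P : MvPolynomial (Fin 2) ℂ)
    (hhom : P.IsHomogeneous d) (hq : IsQuasiInv N m P) :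
    ∀ b0, ∀ t, t < m →
    ∑ b ∈ (Finset.range (d+1)).filter
        (fun b => (2*(N:ℤ)) ∣ (jz d b - jz d b0)),
      P.coeff (expo d b) * (jz d b : ℂ) * ((jz d b : ℂ)^2)^t = 0 := by
  intro b0 t ht
  set w : ℂ := Complex.exp (((Real.pi / N : ℝ) : ℂ) * Complex.I) with hw
  have hNR : (N:ℝ) ≠ 0 := by positivity
  have hw0 : w ≠ 0 := Complex.exp_ne_zero _
  have hprim : IsPrimitiveRoot w (2*N) := by
    have h2N : (2*N : ℕ) ≠ 0 := by positivity
    have h := Complex.isPrimitiveRoot_exp (2*N) h2N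
    rw [hw]
    convert h using 2
    push_cast
    have hNC : (N:ℂ) ≠ 0 := by exact_mod_cast Nat.cast_ne_zero.mpr (by omega)
    field_simp
  have hw2N : w ^ (((2*N : ℕ) : ℤ)) = 1 := by
    have := hprim.pow_eq_one
    rw [← zpow_natCast] at this
    exact this
  have hE : ∀ (j : ℤ) (k : ℕ),
      Complex.exp ((j : ℂ) * Complex.I * ((Real.pi * k / N : ℝ) : ℂ)) = w ^ (j * k) := by
    intro j k
    rw [hw, ← Complex.exp_int_mul]
    congr 1
    push_cast
    field_simp
  have hdouble : ∑ k ∈ Finset.range (2*N), w ^ (-(jz d b0) * k) *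
      (∑ b ∈ Finset.range (d+1), P.coeff (expo d b) *
        ((jz d b : ℂ) * Complex.I) ^ (2*(t+1)-1) *
        Complex.exp (((jz d b : ℂ) * Complex.I) * ((Real.pi * k / N : ℝ) : ℂ))) = 0 := by
    refine Finset.sum_eq_zero fun k _ => ?_
    rw [S_vanish N m d hN P hhom hq k (t+1) (by omega) (by omega), mul_zero]
  have hswap : ∑ k ∈ Finset.range (2*N), w ^ (-(jz d b0) * k) *
      (∑ b ∈ Finset.range (d+1), P.coeff (expo d b) *
        ((jz d b : ℂ) * Complex.I) ^ (2*(t+1)-1) *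
        Complex.exp (((jz d b : ℂ) * Complex.I) * ((Real.pi * k / N : ℝ) : ℂ))) =
      ∑ b ∈ Finset.range (d+1), P.coeff (expo d b) *
        ((jz d b : ℂ) * Complex.I) ^ (2*(t+1)-1) *
        (∑ k ∈ Finset.range (2*N), (w ^ (jz d b - jz d b0)) ^ k) := by
    calc ∑ k ∈ Finset.range (2*N), w ^ (-(jz d b0) * k) *
      (∑ b ∈ Finset.range (d+1), P.coeff (expo d b) *
        ((jz d b : ℂ) * Complex.I) ^ (2*(t+1)-1) *
        Complex.exp (((jz d b : ℂ) * Complex.I) * ((Real.pi * k / N : ℝ) : ℂ)))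
        = ∑ k ∈ Finset.range (2*N), ∑ b ∈ Finset.range (d+1),
            P.coeff (expo d b) * ((jz d b : ℂ) * Complex.I) ^ (2*(t+1)-1) *
            (w ^ (jz d b - jz d b0)) ^ k := by
          refine Finset.sum_congr rfl fun k _ => ?_
          rw [Finset.mul_sum]
          refine Finset.sum_congr rfl fun b _ => ?_
          rw [hE (jz d b) k]
          have hz : (w ^ (jz d b - jz d b0)) ^ k = w ^ (jz d b * k) * w ^ (-(jz d b0) * k) := by
            rw [← zpow_natCast (w ^ (jz d b - jz d b0)) k, ← zpow_mul, ← zpow_add₀ hw0]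
            congr 1
            ring
          rw [hz]
          ring
      _ = ∑ b ∈ Finset.range (d+1), ∑ k ∈ Finset.range (2*N),
            P.coeff (expo d b) * ((jz d b : ℂ) * Complex.I) ^ (2*(t+1)-1) *
            (w ^ (jz d b - jz d b0)) ^ k := Finset.sum_comm
      _ = _ := by
          exact Finset.sum_congr rfl fun b _ => (Finset.mul_sum ..).symm
  have hgeom : ∀ b, (∑ k ∈ Finset.range (2*N), (w ^ (jz d b - jz d b0)) ^ k) =
      if (2*(N:ℤ)) ∣ (jz d b - jz d b0) then ((2*N : ℕ) : ℂ) else 0 := by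
    intro b
    by_cases hdvd : (2*(N:ℤ)) ∣ (jz d b - jz d b0)
    · obtain ⟨q, hq'⟩ := hdvd
      have h1 : w ^ (jz d b - jz d b0) = 1 := by
        rw [hq']
        have : (2*(N:ℤ)) * q = ((2*N : ℕ) : ℤ) * q := by push_cast; ring
        rw [this, zpow_mul, hw2N, one_zpow]
      rw [if_pos ⟨q, hq'⟩, Finset.sum_congr rfl (fun k _ => by rw [h1, one_pow])]
      simp
    · rw [if_neg hdvd]
      have hζ : w ^ (jz d b - jz d b0) ≠ 1 := by
        intro h1
        apply hdvd
        have := (hprim.zpow_eq_one_iff_dvd (jz d b - jz d b0)).mp h1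
        have h2 : ((2*N : ℕ) : ℤ) = 2*(N:ℤ) := by push_cast; ring
        rwa [h2] at this
      rw [geom_sum_eq hζ]
      have hnum : (w ^ (jz d b - jz d b0)) ^ (2*N) = 1 := by
        rw [← zpow_natCast, ← zpow_mul, mul_comm, zpow_mul, hw2N, one_zpow]
      rw [hnum, sub_self, zero_div]
  rw [hswap] at hdouble
  simp only [hgeom] at hdouble
  have hfilter := hdouble
  -- reduce to filtered sum
  have h2N0 : ((2*N : ℕ) : ℂ) ≠ 0 := Nat.cast_ne_zero.mpr (by omega)
  have hI : (Complex.I) ^ (2*(t+1)-1) ≠ 0 := pow_ne_zero _ Complex.I_ne_zero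
  have hfilter2 : ∑ b ∈ (Finset.range (d+1)).filter
      (fun b => (2*(N:ℤ)) ∣ (jz d b - jz d b0)),
      P.coeff (expo d b) * ((jz d b : ℂ) * Complex.I) ^ (2*(t+1)-1) = 0 := by
    have := hfilter
    simp only [mul_ite, mul_zero] at this
    rw [← Finset.sum_filter] at this
    rw [← Finset.sum_mul] at this
    exact (mul_eq_zero.mp this).resolve_right h2N0
  have hpow : ∀ b, P.coeff (expo d b) * ((jz d b : ℂ) * Complex.I) ^ (2*(t+1)-1) =
      (P.coeff (expo d b) * (jz d b : ℂ) * ((jz d b : ℂ)^2)^t) * Complex.I ^ (2*(t+1)-1) := by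
    intro b
    rw [mul_pow]
    have : ((jz d b : ℂ)) ^ (2*(t+1)-1) = (jz d b : ℂ) * ((jz d b : ℂ)^2)^t := by
      have he : 2*(t+1)-1 = 2*t+1 := by omega
      rw [he, ← pow_mul, ← pow_succ']
    rw [this]
    ring
  rw [Finset.sum_congr rfl (fun b _ => hpow b), ← Finset.sum_mul] at hfilter2
  exact (mul_eq_zero.mp hfilter2).resolve_right hI

-- helper: injectivity of division given congruence
lemma div_inj (N : ℕ) (hN : 1 ≤ N) (b b' : ℕ) (hdvd : (N:ℤ) ∣ (b:ℤ) - (b':ℤ))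
    (hdiv : b / N = b' / N) : b = b' := by
  have hmodZ : (b:ℤ) % (N:ℤ) = (b':ℤ) % (N:ℤ) := by
    have h1 : (b':ℤ) ≡ (b:ℤ) [ZMOD (N:ℤ)] := Int.modEq_iff_dvd.mpr hdvd
    exact h1.symm
  have hmod : b % N = b' % N := by exact_mod_cast hmodZ
  calc b = N * (b / N) + b % N := (Nat.div_add_mod b N).symm
    _ = N * (b' / N) + b' % N := by rw [hdiv, hmod]
    _ = b' := Nat.div_add_mod b' N

-- helper: within a class, difference of indices is divisible by N
lemma class_dvd (N d : ℕ) (b b' : ℕ) (h : (2*(N:ℤ)) ∣ (jz d b - jz d b')) :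
    (N:ℤ) ∣ (b:ℤ) - (b':ℤ) := by
  obtain ⟨q, hq⟩ := h
  refine ⟨-q, ?_⟩
  have hthis : jz d b - jz d b' = 2*((b':ℤ) - b) := by simp only [jz]; ring
  have h2 : (2:ℤ)*((b':ℤ) - b) = 2*((N:ℤ)*q) := by linear_combination hq - hthis
  have h3 : ((b':ℤ) - b) = (N:ℤ)*q := mul_left_cancel₀ two_ne_zero h2
  rw [mul_neg]
  linarith

lemma jz_reflect (d b : ℕ) (hb : b ≤ d) : jz d (d - b) = - jz d b := by
  simp only [jz]
  push_cast [Nat.cast_sub hb]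
  ring

-- coefficient vanishing for non-multiple frequencies
lemma coeff_vanish (N m d : ℕ) (hN : 1 ≤ N) (P : MvPolynomial (Fin 2) ℂ)
    (hhom : P.IsHomogeneous d) (hd : d ≤ m * N) (hq : IsQuasiInv N m P) :
    ∀ b0 ∈ Finset.range (d+1), ¬ ((N:ℤ) ∣ jz d b0) → P.coeff (expo d b0) = 0 := by
  intro b0 hb0 hndvd
  set T := (Finset.range (d+1)).filter (fun b => (2*(N:ℤ)) ∣ (jz d b - jz d b0)) with hT
  have hTmem : ∀ b ∈ T, b ∈ Finset.range (d+1) ∧ (2*(N:ℤ)) ∣ (jz d b - jz d b0) := by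
    intro b hb
    exact ⟨(Finset.mem_filter.mp hb).1, (Finset.mem_filter.mp hb).2⟩
  -- no frequency in the class is divisible by N
  have hnd : ∀ b ∈ T, ¬ ((N:ℤ) ∣ jz d b) := by
    intro b hb hdvd
    obtain ⟨_, h2⟩ := hTmem b hb
    apply hndvd
    have h3 : (N:ℤ) ∣ (jz d b - jz d b0) := dvd_trans ⟨2, by ring⟩ h2
    have h4 := dvd_sub hdvd h3
    simpa using h4
  -- cardinality bound
  have hcard : T.card ≤ m := by
    have hmaps : ∀ b ∈ T, b / N ∈ Finset.range m := by
      intro b hb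
      obtain ⟨h1, _⟩ := hTmem b hb
      have hbd : b ≤ d := Nat.lt_succ_iff.mp (Finset.mem_range.mp h1)
      have hble : b ≤ m * N := le_trans hbd hd
      refine Finset.mem_range.mpr ?_
      rcases Nat.lt_or_ge (b / N) m with h | h
      · exact h
      · exfalso
        have hmlb : m * N ≤ b := by
          have := Nat.le_div_iff_mul_le (by omega : 0 < N) |>.mp h
          omega
        have hbeq : b = m * N := le_antisymm hble hmlb
        have hdeq : d = m * N := by omega
        apply hnd b hb
        rw [jz, hbeq, hdeq]
        exact ⟨-(m:ℤ), by push_cast; ring⟩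
    have hinj : Set.InjOn (fun b => b / N) T := by
      intro a ha b hb hab
      have hab2 : (2*(N:ℤ)) ∣ (jz d a - jz d b) := by
        have h := dvd_sub (hTmem a ha).2 (hTmem b hb).2
        rwa [sub_sub_sub_cancel_right] at h
      exact div_inj N hN a b (class_dvd N d a b hab2) hab
    calc T.card ≤ (Finset.range m).card := Finset.card_le_card_of_injOn _ hmaps hinj
      _ = m := Finset.card_range m
  -- injectivity of squared frequencies on the class
  have hxinj : Set.InjOn (fun b => ((jz d b : ℂ))^2) T := by
    intro a ha b hb hab
    have hab' : ((jz d a : ℂ))^2 = ((jz d b : ℂ))^2 := hab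
    have hZ : (jz d a)^2 = (jz d b)^2 := by exact_mod_cast hab'
    have hfac : (jz d a - jz d b) * (jz d a + jz d b) = 0 := by linear_combination hZ
    rcases mul_eq_zero.mp hfac with h | h
    · have : jz d a = jz d b := by omega
      simp only [jz] at this
      omega
    · -- jz a = - jz b forces N ∣ jz a, contradiction
      exfalso
      have hab2 : (2*(N:ℤ)) ∣ (jz d a - jz d b) := by
        have h := dvd_sub (hTmem a ha).2 (hTmem b hb).2
        rwa [sub_sub_sub_cancel_right] at h
      apply hnd a ha
      obtain ⟨q, hq2⟩ := hab2
      have h2 : (2:ℤ)*(jz d a) = 2*((N:ℤ)*q) := by linear_combination hq2 + h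
      exact ⟨q, mul_left_cancel₀ two_ne_zero h2⟩
  -- the linear system
  have heqs : ∀ t < m, ∑ b ∈ T, (P.coeff (expo d b) * (jz d b : ℂ)) * (((jz d b : ℂ))^2) ^ t = 0 := by
    intro t ht
    exact class_eq N m d hN P hhom hq b0 t ht
  have hb0T : b0 ∈ T := Finset.mem_filter.mpr ⟨hb0, by simp⟩
  have := key_vandermonde T m (fun b => P.coeff (expo d b) * (jz d b : ℂ))
    (fun b => ((jz d b : ℂ))^2) hcard hxinj heqs b0 hb0T
  have hj0 : (jz d b0 : ℂ) ≠ 0 := by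
    intro h
    apply hndvd
    have h0 : jz d b0 = 0 := by exact_mod_cast h
    rw [h0]
    exact dvd_zero _
  exact (mul_eq_zero.mp this).resolve_right hj0

lemma coeff_pair_pos (N m d : ℕ) (hN : 1 ≤ N) (P : MvPolynomial (Fin 2) ℂ)
    (hhom : P.IsHomogeneous d) (hd : d ≤ m * N) (hq : IsQuasiInv N m P) :
    ∀ b0 ∈ Finset.range (d+1), (N:ℤ) ∣ jz d b0 → 0 < jz d b0 →
      P.coeff (expo d b0) = P.coeff (expo d (d - b0)) := by
  intro b0 hb0 hdvd hpos
  set T := (Finset.range (d+1)).filter (fun b => (2*(N:ℤ)) ∣ (jz d b - jz d b0)) with hT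
  set Tp := T.filter (fun b => 0 < jz d b) with hTp
  have hTmem : ∀ b ∈ T, b ≤ d ∧ (2*(N:ℤ)) ∣ (jz d b - jz d b0) := by
    intro b hb
    exact ⟨Nat.lt_succ_iff.mp (Finset.mem_range.mp (Finset.mem_filter.mp hb).1),
      (Finset.mem_filter.mp hb).2⟩
  have hdvd2 : (2*(N:ℤ)) ∣ 2 * jz d b0 := by
    obtain ⟨q, hq'⟩ := hdvd
    exact ⟨q, by rw [hq']; ring⟩
  -- reflection stays in the class
  have hrefl : ∀ b ∈ T, (d - b) ∈ T := by
    intro b hb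
    obtain ⟨hble, hbdvd⟩ := hTmem b hb
    refine Finset.mem_filter.mpr ⟨Finset.mem_range.mpr (by omega), ?_⟩
    rw [jz_reflect d b hble]
    have : -jz d b - jz d b0 = -(jz d b - jz d b0) - 2 * jz d b0 := by ring
    rw [this]
    exact dvd_sub (dvd_neg.mpr hbdvd) hdvd2
  -- the symmetrized equations
  have heqs : ∀ t < m, ∑ b ∈ Tp,
      ((P.coeff (expo d b) - P.coeff (expo d (d - b))) * (jz d b : ℂ)) *
        (((jz d b : ℂ))^2) ^ t = 0 := by
    intro t ht
    have hcls := class_eq N m d hN P hhom hq b0 t ht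
    -- split the class sum
    have hsplit := Finset.sum_filter_add_sum_filter_not T (fun b => 0 < jz d b)
      (fun b => P.coeff (expo d b) * (jz d b : ℂ) * ((jz d b : ℂ)^2)^t)
    rw [← hT] at hcls
    -- the non-positive part equals minus the reflected positive part
    have hneg : ∑ b ∈ T.filter (fun b => ¬ 0 < jz d b),
        P.coeff (expo d b) * (jz d b : ℂ) * ((jz d b : ℂ)^2)^t =
        ∑ b ∈ Tp, -(P.coeff (expo d (d - b)) * (jz d b : ℂ) * ((jz d b : ℂ)^2)^t) := by
      have hsub : T.filter (fun b => jz d b < 0) ⊆ T.filter (fun b => ¬ 0 < jz d b) := by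
        intro b hb
        obtain ⟨h1, h2⟩ := Finset.mem_filter.mp hb
        exact Finset.mem_filter.mpr ⟨h1, by omega⟩
      rw [← Finset.sum_subset hsub (fun b hb hnb => ?_)]
      · -- bijection b ↦ d - b between negatives and positives
        refine Finset.sum_nbij' (fun b => d - b) (fun b => d - b) ?_ ?_ ?_ ?_ ?_
        · intro b hb
          obtain ⟨h1, h2⟩ := Finset.mem_filter.mp hb
          have hble := (hTmem b h1).1
          refine Finset.mem_filter.mpr ⟨hrefl b h1, ?_⟩
          rw [jz_reflect d b hble]
          omega
        · intro b hb
          obtain ⟨h1, h2⟩ := Finset.mem_filter.mp hb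
          have hble := (hTmem b h1).1
          refine Finset.mem_filter.mpr ⟨hrefl b h1, ?_⟩
          rw [jz_reflect d b hble]
          omega
        · intro b hb
          obtain ⟨h1, _⟩ := Finset.mem_filter.mp hb
          have hble := (hTmem b h1).1
          show d - (d - b) = b
          omega
        · intro b hb
          obtain ⟨h1, _⟩ := Finset.mem_filter.mp hb
          have hble := (hTmem b h1).1
          show d - (d - b) = b
          omega
        · intro b hb
          obtain ⟨h1, h2⟩ := Finset.mem_filter.mp hb
          have hble := (hTmem b h1).1
          have hd2 : d - (d - b) = b := by omega
          simp only [hd2, jz_reflect d b hble]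
          push_cast
          ring
      · -- terms with jz = 0 vanish
        obtain ⟨h1, hn1⟩ := Finset.mem_filter.mp hb
        have hz : jz d b = 0 := by
          by_contra hzz
          exact hnb (Finset.mem_filter.mpr ⟨h1, by
            have := Finset.mem_filter.mp hb
            omega⟩)
        rw [hz]
        push_cast
        ring
    rw [hneg] at hsplit
    rw [hcls] at hsplit
    calc ∑ b ∈ Tp, ((P.coeff (expo d b) - P.coeff (expo d (d - b))) * (jz d b : ℂ)) *
        (((jz d b : ℂ))^2) ^ t
        = ∑ b ∈ Tp, (P.coeff (expo d b) * (jz d b : ℂ) * ((jz d b : ℂ)^2)^t +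
            -(P.coeff (expo d (d - b)) * (jz d b : ℂ) * ((jz d b : ℂ)^2)^t)) := by
          exact Finset.sum_congr rfl fun b _ => by ring
      _ = ∑ b ∈ Tp, P.coeff (expo d b) * (jz d b : ℂ) * ((jz d b : ℂ)^2)^t +
          ∑ b ∈ Tp, -(P.coeff (expo d (d - b)) * (jz d b : ℂ) * ((jz d b : ℂ)^2)^t) :=
          Finset.sum_add_distrib
      _ = 0 := hsplit
  -- cardinality bound for the positive class
  have hcard : Tp.card ≤ m := by
    have hmaps : ∀ b ∈ Tp, b / N ∈ Finset.range m := by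
      intro b hb
      obtain ⟨h1, h2⟩ := Finset.mem_filter.mp hb
      have hble := (hTmem b h1).1
      have h2b : 2 * (b:ℤ) < d := by
        have := h2
        simp only [jz] at this
        omega
      have hblt : b < m * N := by omega
      exact Finset.mem_range.mpr ((Nat.div_lt_iff_lt_mul (by omega : 0 < N)).mpr hblt)
    have hinj : Set.InjOn (fun b => b / N) Tp := by
      intro a ha b hb hab
      have haT := (Finset.mem_filter.mp ha).1
      have hbT := (Finset.mem_filter.mp hb).1
      have hab2 : (2*(N:ℤ)) ∣ (jz d a - jz d b) := by
        have h := dvd_sub (hTmem a haT).2 (hTmem b hbT).2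
        rwa [sub_sub_sub_cancel_right] at h
      exact div_inj N hN a b (class_dvd N d a b hab2) hab
    calc Tp.card ≤ (Finset.range m).card := Finset.card_le_card_of_injOn _ hmaps hinj
      _ = m := Finset.card_range m
  have hxinj : Set.InjOn (fun b => ((jz d b : ℂ))^2) Tp := by
    intro a ha b hb hab
    have hpa := (Finset.mem_filter.mp ha).2
    have hpb := (Finset.mem_filter.mp hb).2
    have hab' : ((jz d a : ℂ))^2 = ((jz d b : ℂ))^2 := hab
    have hZ : (jz d a)^2 = (jz d b)^2 := by exact_mod_cast hab'
    have hfac : (jz d a - jz d b) * (jz d a + jz d b) = 0 := by linear_combination hZ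
    rcases mul_eq_zero.mp hfac with h | h
    · have : jz d a = jz d b := by omega
      simp only [jz] at this
      omega
    · omega
  have hb0Tp : b0 ∈ Tp := by
    refine Finset.mem_filter.mpr ⟨Finset.mem_filter.mpr ⟨hb0, by simp⟩, hpos⟩
  have hkey := key_vandermonde Tp m
    (fun b => (P.coeff (expo d b) - P.coeff (expo d (d - b))) * (jz d b : ℂ))
    (fun b => ((jz d b : ℂ))^2) hcard hxinj heqs b0 hb0Tp
  have hj0 : (jz d b0 : ℂ) ≠ 0 := by
    intro h
    have h0 : jz d b0 = 0 := by exact_mod_cast h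
    omega
  have := (mul_eq_zero.mp hkey).resolve_right hj0
  exact sub_eq_zero.mp this

lemma coeff_pair (N m d : ℕ) (hN : 1 ≤ N) (P : MvPolynomial (Fin 2) ℂ)
    (hhom : P.IsHomogeneous d) (hd : d ≤ m * N) (hq : IsQuasiInv N m P) :
    ∀ b0 ∈ Finset.range (d+1), (N:ℤ) ∣ jz d b0 →
      P.coeff (expo d b0) = P.coeff (expo d (d - b0)) := by
  intro b0 hb0 hdvd
  have hble : b0 ≤ d := Nat.lt_succ_iff.mp (Finset.mem_range.mp hb0)
  rcases lt_trichotomy (jz d b0) 0 with h | h | h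
  · have hble2 : d - b0 ∈ Finset.range (d+1) := Finset.mem_range.mpr (by omega)
    have hrd : jz d (d - b0) = - jz d b0 := jz_reflect d b0 hble
    have hdvd2 : (N:ℤ) ∣ jz d (d - b0) := by rw [hrd]; exact dvd_neg.mpr hdvd
    have hpos2 : 0 < jz d (d - b0) := by omega
    have := coeff_pair_pos N m d hN P hhom hd hq (d - b0) hble2 hdvd2 hpos2
    have hd2 : d - (d - b0) = b0 := by omega
    rw [hd2] at this
    exact this.symm
  · have : 2 * (b0:ℤ) = d := by simp only [jz] at h; omega
    have hd2 : d - b0 = b0 := by omega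
    rw [hd2]
  · exact coeff_pair_pos N m d hN P hhom hd hq b0 hb0 hdvd h

lemma exp_jz_one (N k : ℕ) (hN : 1 ≤ N) (j : ℤ) (hdvd : (N:ℤ) ∣ j) :
    Complex.exp ((j:ℂ) * (((2*Real.pi*k/N : ℝ):ℂ) * Complex.I)) = 1 := by
  obtain ⟨q, hq⟩ := hdvd
  have hNC : (N:ℂ) ≠ 0 := Nat.cast_ne_zero.mpr (by omega)
  have harg : ((j:ℂ)) * (((2*Real.pi*k/N : ℝ):ℂ) * Complex.I) =
      ((q*k : ℤ):ℂ) * (2*Real.pi*Complex.I) := by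
    rw [hq]
    push_cast
    field_simp
  rw [harg, Complex.exp_int_mul_two_pi_mul_I]

lemma mixpow (θ : ℝ) (a c : ℕ) :
    Complex.exp ((θ:ℂ)*Complex.I)^a * Complex.exp ((θ:ℂ)*(-Complex.I))^c =
    Complex.exp ((((a:ℤ)-(c:ℤ) : ℤ):ℂ) * ((θ:ℂ) * Complex.I)) := by
  rw [← Complex.exp_nat_mul, ← Complex.exp_nat_mul, ← Complex.exp_add]
  congr 1
  push_cast
  ring

/-- Any `m`-quasiinvariant of `I₂(N)` homogeneous of degree `d ≤ mN` is invariant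
under the dihedral group (rotations by `2πk/N` and reflections). -/
theorem stmt0 (N m d : ℕ) (hN : 1 ≤ N) (P : MvPolynomial (Fin 2) ℂ)
    (hhom : P.IsHomogeneous d) (hd : d ≤ m * N) (hq : IsQuasiInv N m P) :
    (∀ (k : ℕ) (z : ℂ),
      evalZ P (Complex.exp (((2 * Real.pi * k / N : ℝ) : ℂ) * Complex.I) * z) = evalZ P z)
    ∧ (∀ (k : ℕ) (z : ℂ),
      evalZ P (Complex.exp (((2 * Real.pi * k / N : ℝ) : ℂ) * Complex.I) * (starRingEnd ℂ) z)
        = evalZ P z) := by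
  have hvan := coeff_vanish N m d hN P hhom hd hq
  have hpair := coeff_pair N m d hN P hhom hd hq
  constructor
  · intro k z
    set θ : ℝ := 2 * Real.pi * k / N with hθ
    set w : ℂ := Complex.exp ((θ:ℂ) * Complex.I) with hw
    have hcw : (starRingEnd ℂ) w = Complex.exp ((θ:ℂ) * (-Complex.I)) := by
      rw [hw, ← Complex.exp_conj, map_mul, Complex.conj_ofReal, Complex.conj_I]
    rw [evalZ_homog P d hhom, evalZ_homog P d hhom]
    refine Finset.sum_congr rfl fun b hb => ?_
    have hble : b ≤ d := Nat.lt_succ_iff.mp (Finset.mem_range.mp hb)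
    by_cases hc : P.coeff (expo d b) = 0
    · rw [hc]; ring
    · have hdvd : (N:ℤ) ∣ jz d b := by
        by_contra hnd
        exact hc (hvan b hb hnd)
      have hcast : ((d - b : ℕ) : ℤ) - (b:ℤ) = jz d b := by
        rw [jz]; push_cast [Nat.cast_sub hble]; ring
      have hfac : w^(d-b) * ((starRingEnd ℂ) w)^b = 1 := by
        rw [hcw, hw, mixpow θ (d-b) b, hcast]
        exact exp_jz_one N k hN (jz d b) hdvd
      rw [map_mul]
      calc P.coeff (expo d b) * (w * z)^(d-b) * ((starRingEnd ℂ) w * (starRingEnd ℂ) z)^b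
          = P.coeff (expo d b) * z^(d-b) * ((starRingEnd ℂ) z)^b *
            (w^(d-b) * ((starRingEnd ℂ) w)^b) := by ring
        _ = _ := by rw [hfac, mul_one]
  · intro k z
    set θ : ℝ := 2 * Real.pi * k / N with hθ
    set w : ℂ := Complex.exp ((θ:ℂ) * Complex.I) with hw
    have hcw : (starRingEnd ℂ) w = Complex.exp ((θ:ℂ) * (-Complex.I)) := by
      rw [hw, ← Complex.exp_conj, map_mul, Complex.conj_ofReal, Complex.conj_I]
    rw [evalZ_homog P d hhom, evalZ_homog P d hhom]
    -- reindex the left sum by b ↦ d - b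
    rw [show ∑ b ∈ Finset.range (d+1), P.coeff (expo d b) * (w * (starRingEnd ℂ) z)^(d-b) *
        ((starRingEnd ℂ) (w * (starRingEnd ℂ) z))^b =
        ∑ b ∈ Finset.range (d+1), P.coeff (expo d (d-b)) * (w * (starRingEnd ℂ) z)^b *
        ((starRingEnd ℂ) (w * (starRingEnd ℂ) z))^(d-b) from
      Finset.sum_nbij' (fun b => d - b) (fun b => d - b)
        (fun b hb => by
          have := Nat.lt_succ_iff.mp (Finset.mem_range.mp hb)
          show d - b ∈ Finset.range (d+1)
          exact Finset.mem_range.mpr (by omega))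
        (fun b hb => by
          have := Nat.lt_succ_iff.mp (Finset.mem_range.mp hb)
          show d - b ∈ Finset.range (d+1)
          exact Finset.mem_range.mpr (by omega))
        (fun b hb => by
          have := Nat.lt_succ_iff.mp (Finset.mem_range.mp hb)
          show d - (d - b) = b; omega)
        (fun b hb => by
          have := Nat.lt_succ_iff.mp (Finset.mem_range.mp hb)
          show d - (d - b) = b; omega)
        (fun b hb => by
          have hble : b ≤ d := Nat.lt_succ_iff.mp (Finset.mem_range.mp hb)
          have hdd : d - (d - b) = b := by omega
          simp only [hdd])]
    refine Finset.sum_congr rfl fun b hb => ?_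
    have hble : b ≤ d := Nat.lt_succ_iff.mp (Finset.mem_range.mp hb)
    rw [map_mul, Complex.conj_conj]
    by_cases hdvd : (N:ℤ) ∣ jz d b
    · have hpb := hpair b hb hdvd
      have hcast : ((b : ℕ) : ℤ) - ((d - b : ℕ):ℤ) = -(jz d b) := by
        rw [jz]; push_cast [Nat.cast_sub hble]; ring
      have hfac : w^b * ((starRingEnd ℂ) w)^(d-b) = 1 := by
        rw [hcw, hw, mixpow θ b (d-b), hcast]
        exact exp_jz_one N k hN (-(jz d b)) (dvd_neg.mpr hdvd)
      calc P.coeff (expo d (d-b)) * (w * (starRingEnd ℂ) z)^b *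
            ((starRingEnd ℂ) w * z)^(d-b)
          = P.coeff (expo d (d-b)) * z^(d-b) * ((starRingEnd ℂ) z)^b *
            (w^b * ((starRingEnd ℂ) w)^(d-b)) := by ring
        _ = P.coeff (expo d (d-b)) * z^(d-b) * ((starRingEnd ℂ) z)^b := by
            rw [hfac, mul_one]
        _ = _ := by rw [← hpb]
    · have hz1 : P.coeff (expo d b) = 0 := hvan b hb hdvd
      have hz2 : P.coeff (expo d (d - b)) = 0 := by
        refine hvan (d-b) (Finset.mem_range.mpr (by omega)) ?_
        rw [jz_reflect d b hble]
        intro hcon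
        exact hdvd (by
          have := dvd_neg.mp hcon
          simpa using this)
      rw [hz1, hz2]
      ring
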